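/- arXiv:2508.07665 — 2 statements merged into one kernel-verified Lean document; each statement's English description precedes it below -/
import Mathlib

section
/- Let c > 0 and 0 < c' < c^{-1/2}. Then there is a constant C > 0 such that for all n ∈ ℕ, the double integral ∬_{0 ≤ s < t ≤ c'} (1 - c s²)ⁿ ds dt ≤ C / √(n+1). -/
set_option maxHeartbeats 1000000 in
theorem double_integral_decay (c c' : ℝ) (hc : 0 < c) (hc'0 : 0 < c')
    (hc' : c' < 1 / Real.sqrt c) :
    ∃ C > (0:ℝ), ∀ n : ℕ,
      (∫ t in (0:ℝ)..c', ∫ s in (0:ℝ)..t, (1 - c * s ^ 2) ^ n)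
        ≤ C / Real.sqrt ((n : ℝ) + 1) := by
  have hsc : 0 < Real.sqrt c := Real.sqrt_pos.mpr hc
  have hscc' : Real.sqrt c * c' < 1 := by
    have := (lt_div_iff₀ hsc).mp hc'
    linarith [this]
  have hcc' : c * c' ^ 2 < 1 := by
    have h1 : (Real.sqrt c * c') ^ 2 < 1 := by
      have h0 : 0 ≤ Real.sqrt c * c' := by positivity
      nlinarith
    rwa [mul_pow, Real.sq_sqrt hc.le] at h1
  refine ⟨2 * c' / Real.sqrt c, by positivity, fun n => ?_⟩
  have hn1 : (0:ℝ) < (n:ℝ) + 1 := by positivity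
  set w : ℝ := Real.sqrt (c * ((n:ℝ) + 1)) with hwdef
  have hwpos : 0 < w := Real.sqrt_pos.mpr (by positivity)
  have hw2 : w ^ 2 = c * ((n:ℝ) + 1) := Real.sq_sqrt (by positivity)
  have hcont : Continuous fun s : ℝ => (1 - c * s ^ 2) ^ n :=
    (continuous_const.sub (continuous_const.mul (continuous_pow 2))).pow n
  have hInt : ∀ a b : ℝ, IntervalIntegrable (fun s : ℝ => (1 - c * s ^ 2) ^ n)
      MeasureTheory.volume a b := fun a b => hcont.intervalIntegrable a b
  -- pointwise nonnegativity on [0, c']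
  have hpos : ∀ s : ℝ, 0 ≤ s → s ≤ c' → 0 ≤ 1 - c * s ^ 2 := by
    intro s hs0 hs1
    have hss : s * s ≤ c' * c' := mul_self_le_mul_self hs0 hs1
    nlinarith
  -- key inner bound
  have key : ∀ t : ℝ, 0 ≤ t → t ≤ c' →
      (∫ s in (0:ℝ)..t, (1 - c * s ^ 2) ^ n) ≤ 2 / w := by
    intro t ht0 htc
    set m : ℝ := min (1 / w) t with hmdef
    have hm0 : 0 ≤ m := le_min (by positivity) ht0
    have hmt : m ≤ t := min_le_right _ _
    have hsplit : (∫ s in (0:ℝ)..t, (1 - c * s ^ 2) ^ n)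
        = (∫ s in (0:ℝ)..m, (1 - c * s ^ 2) ^ n)
          + ∫ s in m..t, (1 - c * s ^ 2) ^ n :=
      (intervalIntegral.integral_add_adjacent_intervals (hInt 0 m) (hInt m t)).symm
    have hpart1 : (∫ s in (0:ℝ)..m, (1 - c * s ^ 2) ^ n) ≤ 1 / w := by
      have hb : (∫ s in (0:ℝ)..m, (1 - c * s ^ 2) ^ n) ≤ ∫ s in (0:ℝ)..m, (1:ℝ) := by
        apply intervalIntegral.integral_mono_on hm0 (hInt 0 m) intervalIntegrable_const
        intro s hs
        have hs0 : 0 ≤ s := hs.1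
        have hsc' : s ≤ c' := le_trans hs.2 (le_trans hmt htc)
        have h0 := hpos s hs0 hsc'
        have h1 : 1 - c * s ^ 2 ≤ 1 := by nlinarith
        calc (1 - c * s ^ 2) ^ n ≤ 1 ^ n := pow_le_pow_left₀ h0 h1 n
          _ = 1 := one_pow n
      rw [integral_one] at hb
      calc (∫ s in (0:ℝ)..m, (1 - c * s ^ 2) ^ n) ≤ m - 0 := hb
        _ ≤ 1 / w := by
            have := min_le_left (1 / w) t
            simp only [hmdef]
            linarith [this]
    have hpart2 : (∫ s in m..t, (1 - c * s ^ 2) ^ n) ≤ 1 / w := by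
      by_cases hcase : t ≤ 1 / w
      · have hmth : m = t := min_eq_right hcase
        rw [hmth, intervalIntegral.integral_same]
        positivity
      · push_neg at hcase
        have hm : m = 1 / w := min_eq_left hcase.le
        rw [hm]
        set a : ℝ := c / w with hadef
        have ha : 0 < a := by positivity
        have haw : a * w = c := by rw [hadef]; field_simp
        -- pointwise comparison on [1/w, t]
        have hcomp : (∫ s in (1/w)..t, (1 - c * s ^ 2) ^ n)
            ≤ ∫ s in (1/w)..t, (1 - a * s) ^ n := by
          apply intervalIntegral.integral_mono_on hcase.le (hInt _ _)
            (((continuous_const.sub (continuous_const.mul continuous_id)).pow n).intervalIntegrable _ _)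
          intro s hs
          have hs0 : 0 ≤ s := le_trans (by positivity) hs.1
          have hsc' : s ≤ c' := le_trans hs.2 htc
          have h0 := hpos s hs0 hsc'
          have hws : 1 ≤ w * s := by
            have := hs.1
            rw [div_le_iff₀ hwpos] at this
            linarith [this]
          have hle : 1 - c * s ^ 2 ≤ 1 - a * s := by
            have key2 : a * s ≤ c * s ^ 2 := by
              have h3 : 0 ≤ a * s * (w * s - 1) := by
                apply mul_nonneg (mul_nonneg ha.le hs0)
                linarith
              have h4 : c * s ^ 2 = a * s * (w * s - 1) + a * s := by
                rw [← haw]; ring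
              linarith
            linarith
          exact pow_le_pow_left₀ h0 hle n
        -- compute the linear integral
        have hval : (∫ s in (1/w)..t, (1 - a * s) ^ n)
            = ((1 - a * (1/w)) ^ (n+1) - (1 - a * t) ^ (n+1)) / (a * ((n:ℝ)+1)) := by
          have hrw : (∫ s in (1/w)..t, (1 - a * s) ^ n)
              = ∫ s in (1/w)..t, (fun u : ℝ => u ^ n) ((-a) * s + 1) := by
            congr 1 with s; ring_nf
          rw [hrw, intervalIntegral.integral_comp_mul_add (fun u : ℝ => u ^ n)
            (by simpa using ha.ne') 1, integral_pow]
          have hane : a ≠ 0 := ha.ne'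
          have hn : ((n:ℝ) + 1) ≠ 0 := hn1.ne'
          simp only [smul_eq_mul]
          push_cast
          field_simp
          ring
        rw [hval] at hcomp
        have haw1 : a * ((n:ℝ) + 1) = w := by
          have : a * ((n:ℝ) + 1) * w = w * w := by
            calc a * ((n:ℝ) + 1) * w = (a * w) * ((n:ℝ) + 1) := by ring
              _ = c * ((n:ℝ) + 1) := by rw [haw]
              _ = w * w := by nlinarith [hw2]
          have := mul_right_cancel₀ hwpos.ne' this
          linarith [this]
        have haww : a * (1/w) = 1/((n:ℝ)+1) := by
          rw [eq_div_iff hn1.ne']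
          calc a * (1/w) * ((n:ℝ)+1) = a * ((n:ℝ)+1) * (1/w) := by ring
            _ = w * (1/w) := by rw [haw1]
            _ = 1 := by field_simp
        have hnum : (1 - a * (1/w)) ^ (n+1) - (1 - a * t) ^ (n+1) ≤ 1 := by
          have h1 : (1 - a * (1/w)) ^ (n+1) ≤ 1 := by
            apply pow_le_one₀
            · rw [haww]
              have : 1/((n:ℝ)+1) ≤ 1 := by
                rw [div_le_one hn1]; linarith
              linarith
            · have hpos' : 0 < a * (1/w) := by positivity
              linarith
          have h2 : 0 ≤ (1 - a * t) ^ (n+1) := by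
            apply pow_nonneg
            have hws : Real.sqrt c ≤ w := by
              rw [hwdef]
              apply Real.sqrt_le_sqrt
              nlinarith
            have hat : a * t ≤ 1 := by
              have heq : a * t = c * t / w := by rw [hadef]; ring
              rw [heq, div_le_one hwpos]
              calc c * t ≤ c * c' := by nlinarith
                _ = Real.sqrt c * (Real.sqrt c * c') := by
                    rw [← mul_assoc, Real.mul_self_sqrt hc.le]
                _ ≤ Real.sqrt c * 1 := by nlinarith
                _ ≤ w := by linarith
            linarith
          linarith
        calc (∫ s in (1/w)..t, (1 - c * s ^ 2) ^ n)
            ≤ ((1 - a * (1/w)) ^ (n+1) - (1 - a * t) ^ (n+1)) / (a * ((n:ℝ)+1)) := hcomp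
          _ ≤ 1 / (a * ((n:ℝ)+1)) := by
              have hd : 0 < a * ((n:ℝ)+1) := by positivity
              exact div_le_div_of_nonneg_right hnum hd.le
          _ = 1 / w := by rw [haw1]
    rw [hsplit]
    have : 1 / w + 1 / w = 2 / w := by ring
    linarith
  -- outer integral
  have hFcont : Continuous fun t : ℝ => ∫ s in (0:ℝ)..t, (1 - c * s ^ 2) ^ n :=
    intervalIntegral.continuous_primitive (fun a b => hInt a b) 0
  have houter : (∫ t in (0:ℝ)..c', ∫ s in (0:ℝ)..t, (1 - c * s ^ 2) ^ n)
      ≤ ∫ t in (0:ℝ)..c', (2 / w : ℝ) := by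
    apply intervalIntegral.integral_mono_on hc'0.le
      (hFcont.intervalIntegrable 0 c') intervalIntegrable_const
    intro t ht
    exact key t ht.1 ht.2
  have hval : (∫ t in (0:ℝ)..c', (2 / w : ℝ)) = c' * (2 / w) := by
    simp [mul_comm]
    ring
  have hwmul : w = Real.sqrt c * Real.sqrt ((n:ℝ) + 1) := by
    rw [hwdef, Real.sqrt_mul hc.le]
  have hsn : 0 < Real.sqrt ((n:ℝ) + 1) := Real.sqrt_pos.mpr hn1
  calc (∫ t in (0:ℝ)..c', ∫ s in (0:ℝ)..t, (1 - c * s ^ 2) ^ n)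
      ≤ c' * (2 / w) := by rw [← hval]; exact houter
    _ = 2 * c' / Real.sqrt c / Real.sqrt ((n:ℝ) + 1) := by
        rw [hwmul]; field_simp
end

section
/- For every integer k ≥ 4, the quantity 3·[B(2(k-2), k+2)/(2^{k-3}Γ(k-2))]·[2^{k-1}Γ(k)/B(2k, k+2)] − ([B(2(k-1), k+2)/(2^{k-2}Γ(k-1))]·[2^{k-1}Γ(k)/B(2k, k+2)])² is strictly positive, and equals 18k(3k+1)(2k(k(3k−5)+4)−1)/((2k−1)²(2k−3)). -/
open Nat
set_option maxHeartbeats 1000000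

/-- The Beta function. -/
noncomputable def Beta (x y : ℝ) : ℝ := Real.Gamma x * Real.Gamma y / Real.Gamma (x + y)

lemma wendland_aux (n : ℕ) :
    3 * (Beta (2 * (((n:ℝ)+4) - 2)) (((n:ℝ)+4) + 2) / (2 ^ (n+1) * Real.Gamma (((n:ℝ)+4) - 2))) *
          (2 ^ (n+3) * Real.Gamma ((n:ℝ)+4) / Beta (2 * ((n:ℝ)+4)) (((n:ℝ)+4) + 2)) -
        ((Beta (2 * (((n:ℝ)+4) - 1)) (((n:ℝ)+4) + 2) / (2 ^ (n+2) * Real.Gamma (((n:ℝ)+4) - 1))) *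
          (2 ^ (n+3) * Real.Gamma ((n:ℝ)+4) / Beta (2 * ((n:ℝ)+4)) (((n:ℝ)+4) + 2))) ^ 2
      = 18 * ((n:ℝ)+4) * (3 * ((n:ℝ)+4) + 1) *
          (2 * ((n:ℝ)+4) * (((n:ℝ)+4) * (3 * ((n:ℝ)+4) - 5) + 4) - 1) /
          ((2 * ((n:ℝ)+4) - 1) ^ 2 * (2 * ((n:ℝ)+4) - 3)) := by
  have hn0 : (0:ℝ) ≤ (n:ℝ) := Nat.cast_nonneg n
  have d1 : (2 * ((n:ℝ)+4) - 1) ≠ 0 := by nlinarith [hn0]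
  have d2 : (2 * ((n:ℝ)+4) - 3) ≠ 0 := by nlinarith [hn0]
  have G : ∀ m : ℕ, Real.Gamma ((m:ℝ)+1) = (m ! : ℝ) := fun m => by
    exact_mod_cast Real.Gamma_nat_eq_factorial m
  have g1 : Real.Gamma (2 * (((n:ℝ)+4) - 2)) = (2*n+3) ! := by
    rw [show 2 * (((n:ℝ)+4) - 2) = ((2*n+3:ℕ):ℝ)+1 by push_cast; ring, G]
  have g2 : Real.Gamma (((n:ℝ)+4) + 2) = (n+5) ! := by
    rw [show ((n:ℝ)+4) + 2 = ((n+5:ℕ):ℝ)+1 by push_cast; ring, G]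
  have g3 : Real.Gamma (2 * (((n:ℝ)+4) - 2) + (((n:ℝ)+4) + 2)) = (3*n+9) ! := by
    rw [show 2 * (((n:ℝ)+4) - 2) + (((n:ℝ)+4) + 2) = ((3*n+9:ℕ):ℝ)+1 by push_cast; ring, G]
  have g4 : Real.Gamma (((n:ℝ)+4) - 2) = (n+1) ! := by
    rw [show ((n:ℝ)+4) - 2 = ((n+1:ℕ):ℝ)+1 by push_cast; ring, G]
  have g5 : Real.Gamma ((n:ℝ)+4) = (n+3) ! := by
    rw [show ((n:ℝ)+4) = ((n+3:ℕ):ℝ)+1 by push_cast; ring, G]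
  have g6 : Real.Gamma (2 * ((n:ℝ)+4)) = (2*n+7) ! := by
    rw [show 2 * ((n:ℝ)+4) = ((2*n+7:ℕ):ℝ)+1 by push_cast; ring, G]
  have g7 : Real.Gamma (2 * ((n:ℝ)+4) + (((n:ℝ)+4) + 2)) = (3*n+13) ! := by
    rw [show 2 * ((n:ℝ)+4) + (((n:ℝ)+4) + 2) = ((3*n+13:ℕ):ℝ)+1 by push_cast; ring, G]
  have g8 : Real.Gamma (2 * (((n:ℝ)+4) - 1)) = (2*n+5) ! := by
    rw [show 2 * (((n:ℝ)+4) - 1) = ((2*n+5:ℕ):ℝ)+1 by push_cast; ring, G]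
  have g9 : Real.Gamma (2 * (((n:ℝ)+4) - 1) + (((n:ℝ)+4) + 2)) = (3*n+11) ! := by
    rw [show 2 * (((n:ℝ)+4) - 1) + (((n:ℝ)+4) + 2) = ((3*n+11:ℕ):ℝ)+1 by push_cast; ring, G]
  have g10 : Real.Gamma (((n:ℝ)+4) - 1) = (n+2) ! := by
    rw [show ((n:ℝ)+4) - 1 = ((n+2:ℕ):ℝ)+1 by push_cast; ring, G]
  -- factorial expansions (in ℕ, then cast)
  have f1 : (2*n+7) ! = (2*n+7)*((2*n+6)*((2*n+5)*((2*n+4)*(2*n+3) !))) := by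
    rw [show 2*n+7 = (2*n+6)+1 from rfl, Nat.factorial_succ,
        show 2*n+6 = (2*n+5)+1 from rfl, Nat.factorial_succ,
        show 2*n+5 = (2*n+4)+1 from rfl, Nat.factorial_succ,
        show 2*n+4 = (2*n+3)+1 from rfl, Nat.factorial_succ]
  have f2 : (3*n+13) ! = (3*n+13)*((3*n+12)*((3*n+11)*((3*n+10)*(3*n+9) !))) := by
    rw [show 3*n+13 = (3*n+12)+1 from rfl, Nat.factorial_succ,
        show 3*n+12 = (3*n+11)+1 from rfl, Nat.factorial_succ,
        show 3*n+11 = (3*n+10)+1 from rfl, Nat.factorial_succ,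
        show 3*n+10 = (3*n+9)+1 from rfl, Nat.factorial_succ]
  have f3 : (2*n+5) ! = (2*n+5)*((2*n+4)*(2*n+3) !) := by
    rw [show 2*n+5 = (2*n+4)+1 from rfl, Nat.factorial_succ,
        show 2*n+4 = (2*n+3)+1 from rfl, Nat.factorial_succ]
  have f4 : (3*n+11) ! = (3*n+11)*((3*n+10)*(3*n+9) !) := by
    rw [show 3*n+11 = (3*n+10)+1 from rfl, Nat.factorial_succ,
        show 3*n+10 = (3*n+9)+1 from rfl, Nat.factorial_succ]
  have f5 : (n+3) ! = (n+3)*((n+2)*(n+1) !) := by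
    rw [show n+3 = (n+2)+1 from rfl, Nat.factorial_succ,
        show n+2 = (n+1)+1 from rfl, Nat.factorial_succ]
  have f6 : (n+2) ! = (n+2)*(n+1) ! := by
    rw [show n+2 = (n+1)+1 from rfl, Nat.factorial_succ]
  have p1 : ((2*n+3) ! : ℝ) ≠ 0 := by positivity
  have p2 : ((3*n+9) ! : ℝ) ≠ 0 := by positivity
  have p3 : ((n+1) ! : ℝ) ≠ 0 := by positivity
  have p4 : ((n+5) ! : ℝ) ≠ 0 := by positivity
  have p5 : (2:ℝ) ^ (n+1) ≠ 0 := by positivity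
  have hn : (0:ℝ) ≤ n := Nat.cast_nonneg n
  unfold Beta
  rw [g1, g2, g3, g4, g5, g6, g7, g8, g9, g10, f1, f2, f3, f4, f5, f6]
  push_cast
  set x := (n:ℝ) with hx
  set a := ((2*n+3)! : ℝ) with ha
  set b := ((n+5)! : ℝ) with hb
  set c := ((3*n+9)! : ℝ) with hc
  set d := ((n+1)! : ℝ) with hd
  set p := (2:ℝ)^(n+1) with hp
  rw [show (2:ℝ)^(n+3) = 4*p by rw [hp]; ring, show (2:ℝ)^(n+2) = 2*p by rw [hp]; ring]
  field_simp
  ring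


theorem wendland_A2_quantity (k : ℕ) (hk : 4 ≤ k) :
    (0:ℝ) <
      3 * (Beta (2 * ((k : ℝ) - 2)) ((k : ℝ) + 2) / (2 ^ (k - 3) * Real.Gamma ((k : ℝ) - 2))) *
          (2 ^ (k - 1) * Real.Gamma (k : ℝ) / Beta (2 * (k : ℝ)) ((k : ℝ) + 2)) -
        ((Beta (2 * ((k : ℝ) - 1)) ((k : ℝ) + 2) / (2 ^ (k - 2) * Real.Gamma ((k : ℝ) - 1))) *
          (2 ^ (k - 1) * Real.Gamma (k : ℝ) / Beta (2 * (k : ℝ)) ((k : ℝ) + 2))) ^ 2 ∧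
    3 * (Beta (2 * ((k : ℝ) - 2)) ((k : ℝ) + 2) / (2 ^ (k - 3) * Real.Gamma ((k : ℝ) - 2))) *
          (2 ^ (k - 1) * Real.Gamma (k : ℝ) / Beta (2 * (k : ℝ)) ((k : ℝ) + 2)) -
        ((Beta (2 * ((k : ℝ) - 1)) ((k : ℝ) + 2) / (2 ^ (k - 2) * Real.Gamma ((k : ℝ) - 1))) *
          (2 ^ (k - 1) * Real.Gamma (k : ℝ) / Beta (2 * (k : ℝ)) ((k : ℝ) + 2))) ^ 2
      = 18 * (k : ℝ) * (3 * (k : ℝ) + 1) *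
          (2 * (k : ℝ) * ((k : ℝ) * (3 * (k : ℝ) - 5) + 4) - 1) /
          ((2 * (k : ℝ) - 1) ^ 2 * (2 * (k : ℝ) - 3)) := by
  obtain ⟨n, rfl⟩ : ∃ n, k = n + 4 := ⟨k - 4, by omega⟩
  have h3 : n + 4 - 3 = n + 1 := by omega
  have h2 : n + 4 - 2 = n + 2 := by omega
  have h1 : n + 4 - 1 = n + 3 := by omega
  have hc : ((n + 4 : ℕ) : ℝ) = (n:ℝ) + 4 := by push_cast; ring
  rw [h3, h2, h1, hc, wendland_aux n]
  have hx : (0:ℝ) ≤ (n:ℝ) := Nat.cast_nonneg n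
  refine ⟨?_, rfl⟩
  apply _root_.div_pos
  · nlinarith [hx, mul_nonneg hx hx, mul_nonneg (mul_nonneg hx hx) hx,
      mul_nonneg (mul_nonneg (mul_nonneg hx hx) hx) hx,
      mul_nonneg (mul_nonneg (mul_nonneg (mul_nonneg hx hx) hx) hx) hx]
  · nlinarith [hx, mul_nonneg hx hx, mul_nonneg (mul_nonneg hx hx) hx]
end
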